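/- Let P be a finite set of points in the plane in general position, and let S be an empty square in orientation φ having a point p ∈ P at its bottom-left corner and a point q ∈ P with q ≠ p on its bottom side. Then the square S' in orientation φ whose bottom side is exactly the segment from p to q (so that p is its bottom-left corner and q is its bottom-right corner) is contained in S, is empty, and is a stapled (4,2)-square with contact type {(p, bottom), (p, left), (q, bottom), (q, right)}. -/
import Mathlib


open Real Set

/-- The four side labels of a square. -/
inductive SqSide : Type
  | top
  | right
  | bottom
  | left
  deriving DecidableEq

/-- A (solid, closed) square in the plane, given by its center, its radius `r`
(half the side length) and its orientation `θ`. -/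
structure Square : Type where
  center : ℝ × ℝ
  r : ℝ
  θ : ℝ

namespace Square

/-- The local `x`-coordinate of a point in the rotated frame of the square. -/
noncomputable def lx (S : Square) (p : ℝ × ℝ) : ℝ :=
  (p.1 - S.center.1) * Real.cos S.θ + (p.2 - S.center.2) * Real.sin S.θ

/-- The local `y`-coordinate of a point in the rotated frame of the square. -/
noncomputable def ly (S : Square) (p : ℝ × ℝ) : ℝ :=
  -(p.1 - S.center.1) * Real.sin S.θ + (p.2 - S.center.2) * Real.cos S.θ

/-- A valid parametrization: nonnegative radius and orientation in `[0, π/2)`.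
Every geometric square (with sides parallel to the directions `θ` and `θ + π/2`
for some `θ`) has such a parametrization, which is unique when `0 < r`. -/
def Valid (S : Square) : Prop :=
  0 ≤ S.r ∧ 0 ≤ S.θ ∧ S.θ < Real.pi / 2

/-- Membership in the closed solid square. -/
def Mem (S : Square) (p : ℝ × ℝ) : Prop :=
  |S.lx p| ≤ S.r ∧ |S.ly p| ≤ S.r

/-- The square as a subset of the plane. -/
def toSet (S : Square) : Set (ℝ × ℝ) :=
  {p | S.Mem p}

/-- Membership in the interior of the square. -/
def InteriorMem (S : Square) (p : ℝ × ℝ) : Prop :=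
  |S.lx p| < S.r ∧ |S.ly p| < S.r

/-- `p` lies on the closed side of `S` labeled `a` (sides include their endpoints). -/
def OnSide (S : Square) (a : SqSide) (p : ℝ × ℝ) : Prop :=
  match a with
  | SqSide.top    => S.ly p = S.r ∧ |S.lx p| ≤ S.r
  | SqSide.bottom => S.ly p = -S.r ∧ |S.lx p| ≤ S.r
  | SqSide.right  => S.lx p = S.r ∧ |S.ly p| ≤ S.r
  | SqSide.left   => S.lx p = -S.r ∧ |S.ly p| ≤ S.r

/-- `p` lies on the boundary of `S`. -/
def OnBoundary (S : Square) (p : ℝ × ℝ) : Prop :=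
  ∃ a : SqSide, S.OnSide a p

/-- `S` is a square in orientation `φ`, i.e. its sides are parallel to the
directions `φ` and `φ + π/2` (orientations are taken modulo `π/2`). -/
def InOrientation (S : Square) (φ : ℝ) : Prop :=
  ∃ k : ℤ, φ - S.θ = (k : ℝ) * (Real.pi / 2)

/-- The opposite side label. -/
def _root_.SqSide.opp : SqSide → SqSide
  | SqSide.top => SqSide.bottom
  | SqSide.bottom => SqSide.top
  | SqSide.left => SqSide.right
  | SqSide.right => SqSide.left

end Square

/-- The set of contact pairs of the square `S` with respect to the point set `P`:
pairs `(p, a)` with `p ∈ P` lying on the side of `S` labeled `a`. -/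
def contactPairs (P : Finset (ℝ × ℝ)) (S : Square) : Set ((ℝ × ℝ) × SqSide) :=
  {pa | pa.1 ∈ P ∧ S.OnSide pa.2 pa.1}

/-- The set of contact points of `S`: points of `P` on the boundary of `S`. -/
def contactPoints (P : Finset (ℝ × ℝ)) (S : Square) : Set (ℝ × ℝ) :=
  {p | p ∈ P ∧ S.OnBoundary p}

/-- `S` is an empty square among `P`: a (validly parametrized) square whose
interior contains no point of `P`. -/
def IsEmptySquare (P : Finset (ℝ × ℝ)) (S : Square) : Prop :=
  S.Valid ∧ ∀ p ∈ P, ¬ S.InteriorMem p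

/-- `P` is in general position: no square in any orientation has five or more
contact pairs among `P`. -/
def GenPos (P : Finset (ℝ × ℝ)) : Prop :=
  ∀ S : Square, S.Valid → (contactPairs P S).ncard ≤ 4

/-- A `4`-square: an empty square with exactly four contact pairs. -/
def Is4Square (P : Finset (ℝ × ℝ)) (S : Square) : Prop :=
  IsEmptySquare P S ∧ (contactPairs P S).ncard = 4

/-- A nontrivial `4`-square: a `4`-square which is not a degenerate
single-point square (i.e. it has positive radius). -/
def IsNontrivial4Square (P : Finset (ℝ × ℝ)) (S : Square) : Prop :=
  Is4Square P S ∧ 0 < S.r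

/-- A `(4,k)`-square: a `4`-square with exactly `k` contact points. -/
def Is4kSquare (P : Finset (ℝ × ℝ)) (k : ℕ) (S : Square) : Prop :=
  Is4Square P S ∧ (contactPoints P S).ncard = k

/-- `S` is stapled: some side of `S` contains two distinct points of `P`. -/
def IsStapled (P : Finset (ℝ × ℝ)) (S : Square) : Prop :=
  ∃ a : SqSide, ∃ p ∈ P, ∃ q ∈ P, p ≠ q ∧ S.OnSide a p ∧ S.OnSide a q

instance : Fintype SqSide :=
  ⟨{SqSide.top, SqSide.right, SqSide.bottom, SqSide.left}, by intro x; cases x <;> simp⟩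

lemma Square.coord_inj (S : Square) {x y : ℝ × ℝ}
    (h1 : S.lx x = S.lx y) (h2 : S.ly x = S.ly y) : x = y := by
  have hs := Real.sin_sq_add_cos_sq S.θ
  simp only [Square.lx, Square.ly] at h1 h2
  have e1 : x.1 = y.1 := by
    linear_combination Real.cos S.θ * h1 - Real.sin S.θ * h2 - (x.1 - y.1) * hs
  have e2 : x.2 = y.2 := by
    linear_combination Real.sin S.θ * h1 + Real.cos S.θ * h2 - (x.2 - y.2) * hs
  exact Prod.ext e1 e2

/-- If an empty square `S` has `p ∈ P` at its bottom-left corner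
and `q ∈ P`, `q ≠ p`, on its bottom side, then the square `S'` in the same
orientation whose bottom side is exactly the segment from `p` to `q` is contained
in `S`, empty, and a stapled `(4,2)`-square with contact type
`{(p, bottom), (p, left), (q, bottom), (q, right)}`. -/
theorem stapled42_from_stapled_side (P : Finset (ℝ × ℝ)) (hP : GenPos P)
    (S : Square) (hS : IsEmptySquare P S)
    (p q : ℝ × ℝ) (hp : p ∈ P) (hq : q ∈ P) (hpq : p ≠ q)
    (hpb : S.OnSide SqSide.bottom p) (hpl : S.OnSide SqSide.left p)
    (hqb : S.OnSide SqSide.bottom q) :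
    ∃ S' : Square, S'.θ = S.θ ∧
      S'.OnSide SqSide.bottom p ∧ S'.OnSide SqSide.left p ∧
      S'.OnSide SqSide.bottom q ∧ S'.OnSide SqSide.right q ∧
      S'.toSet ⊆ S.toSet ∧ IsEmptySquare P S' ∧ IsStapled P S' ∧
      Is4kSquare P 2 S' ∧
      contactPairs P S' =
        ({(p, SqSide.bottom), (p, SqSide.left), (q, SqSide.bottom), (q, SqSide.right)} :
          Set ((ℝ × ℝ) × SqSide)) := by
  obtain ⟨⟨hr0, hth0, hthpi⟩, hempty⟩ := hS
  obtain ⟨hlyp, hlxpabs⟩ := hpb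
  obtain ⟨hlxp, hlypabs⟩ := hpl
  obtain ⟨hlyq, hlxqabs⟩ := hqb
  have htq_le : S.lx q ≤ S.r := (abs_le.mp hlxqabs).2
  have htq_gt : -S.r < S.lx q := by
    rcases lt_or_eq_of_le (abs_le.mp hlxqabs).1 with h | h
    · exact h
    · exact absurd (S.coord_inj (hlxp.trans h) (hlyp.trans hlyq.symm)) hpq
  set r' : ℝ := (S.lx q + S.r) / 2 with hr'def
  set d : ℝ := r' - S.r with hddef
  have hr'pos : 0 < r' := by rw [hr'def]; linarith
  have hr'le : r' ≤ S.r := by rw [hr'def]; linarith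
  obtain ⟨S', hc', hr'eq, hθeq⟩ :
      ∃ S' : Square, S'.center = (S.center.1 + d * Real.cos S.θ - d * Real.sin S.θ,
        S.center.2 + d * Real.sin S.θ + d * Real.cos S.θ) ∧ S'.r = r' ∧ S'.θ = S.θ :=
    ⟨⟨_, _, _⟩, rfl, rfl, rfl⟩
  have hs := Real.sin_sq_add_cos_sq S.θ
  have hlx : ∀ x : ℝ × ℝ, S'.lx x = S.lx x - d := by
    intro x
    simp only [Square.lx, hc', hθeq]
    linear_combination (-d) * hs
  have hly : ∀ x : ℝ × ℝ, S'.ly x = S.ly x - d := by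
    intro x
    simp only [Square.ly, hc', hθeq]
    linear_combination (-d) * hs
  have hplx : S'.lx p = -r' := by rw [hlx, hlxp, hddef]; ring
  have hply : S'.ly p = -r' := by rw [hly, hlyp, hddef]; ring
  have hqlx : S'.lx q = r' := by rw [hlx, hddef, hr'def]; ring
  have hqly : S'.ly q = -r' := by rw [hly, hlyq, hddef]; ring
  have habs : |(-r' : ℝ)| ≤ r' := by rw [abs_neg, abs_of_pos hr'pos]
  have habs' : |(r' : ℝ)| ≤ r' := by rw [abs_of_pos hr'pos]
  have hpb' : S'.OnSide SqSide.bottom p := by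
    refine ⟨?_, ?_⟩ <;> rw [hr'eq]
    · exact hply
    · rw [hplx]; exact habs
  have hpl' : S'.OnSide SqSide.left p := by
    refine ⟨?_, ?_⟩ <;> rw [hr'eq]
    · exact hplx
    · rw [hply]; exact habs
  have hqb' : S'.OnSide SqSide.bottom q := by
    refine ⟨?_, ?_⟩ <;> rw [hr'eq]
    · exact hqly
    · rw [hqlx]; exact habs'
  have hqr' : S'.OnSide SqSide.right q := by
    refine ⟨?_, ?_⟩ <;> rw [hr'eq]
    · exact hqlx
    · rw [hqly]; exact habs
  have hsubset : S'.toSet ⊆ S.toSet := by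
    intro x hx
    obtain ⟨h1, h2⟩ := hx
    rw [hr'eq, hlx] at h1
    rw [hr'eq, hly] at h2
    obtain ⟨h1a, h1b⟩ := abs_le.mp h1
    obtain ⟨h2a, h2b⟩ := abs_le.mp h2
    refine ⟨abs_le.mpr ⟨?_, ?_⟩, abs_le.mpr ⟨?_, ?_⟩⟩ <;> rw [hddef] at * <;> linarith
  have hintsub : ∀ x : ℝ × ℝ, S'.InteriorMem x → S.InteriorMem x := by
    intro x hx
    obtain ⟨h1, h2⟩ := hx
    rw [hr'eq, hlx] at h1
    rw [hr'eq, hly] at h2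
    obtain ⟨h1a, h1b⟩ := abs_lt.mp h1
    obtain ⟨h2a, h2b⟩ := abs_lt.mp h2
    refine ⟨abs_lt.mpr ⟨?_, ?_⟩, abs_lt.mpr ⟨?_, ?_⟩⟩ <;> rw [hddef] at * <;> linarith
  have hvalid : S'.Valid := by
    refine ⟨?_, ?_, ?_⟩
    · rw [hr'eq]; exact le_of_lt hr'pos
    · rw [hθeq]; exact hth0
    · rw [hθeq]; exact hthpi
  have hempty' : IsEmptySquare P S' :=
    ⟨hvalid, fun x hx hint => hempty x hx (hintsub x hint)⟩
  have hA : (p, SqSide.bottom) ∈ contactPairs P S' := ⟨hp, hpb'⟩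
  have hB : (p, SqSide.left) ∈ contactPairs P S' := ⟨hp, hpl'⟩
  have hC : (q, SqSide.bottom) ∈ contactPairs P S' := ⟨hq, hqb'⟩
  have hD : (q, SqSide.right) ∈ contactPairs P S' := ⟨hq, hqr'⟩
  have h4 : ({(p, SqSide.bottom), (p, SqSide.left), (q, SqSide.bottom), (q, SqSide.right)} :
      Set ((ℝ × ℝ) × SqSide)).ncard = 4 := by
    rw [Set.ncard_insert_of_notMem (by simp [hpq, Prod.ext_iff]),
      Set.ncard_insert_of_notMem (by simp [hpq, Prod.ext_iff]),
      Set.ncard_insert_of_notMem (by simp [Prod.ext_iff]), Set.ncard_singleton]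
  have hfin : (contactPairs P S').Finite := by
    apply Set.Finite.subset (Set.Finite.prod P.finite_toSet Set.finite_univ)
    intro z hz
    exact Set.mem_prod.mpr ⟨hz.1, Set.mem_univ _⟩
  have key : contactPairs P S' ⊆
      ({(p, SqSide.bottom), (p, SqSide.left), (q, SqSide.bottom), (q, SqSide.right)} :
        Set ((ℝ × ℝ) × SqSide)) := by
    intro z hz
    by_contra hzn
    have hsub : insert z ({(p, SqSide.bottom), (p, SqSide.left), (q, SqSide.bottom),
        (q, SqSide.right)} : Set ((ℝ × ℝ) × SqSide)) ⊆ contactPairs P S' := by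
      intro w hw
      rcases Set.mem_insert_iff.mp hw with rfl | hw
      · exact hz
      · simp only [Set.mem_insert_iff, Set.mem_singleton_iff] at hw
        rcases hw with rfl | rfl | rfl | rfl
        exacts [hA, hB, hC, hD]
    have h5 : (insert z ({(p, SqSide.bottom), (p, SqSide.left), (q, SqSide.bottom),
        (q, SqSide.right)} : Set ((ℝ × ℝ) × SqSide))).ncard = 5 := by
      rw [Set.ncard_insert_of_notMem hzn, h4]
    have hle := Set.ncard_le_ncard hsub hfin
    have hle4 := hP S' hvalid
    omega
  have heq : contactPairs P S' =
      ({(p, SqSide.bottom), (p, SqSide.left), (q, SqSide.bottom), (q, SqSide.right)} :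
        Set ((ℝ × ℝ) × SqSide)) := by
    refine Set.Subset.antisymm key ?_
    intro w hw
    simp only [Set.mem_insert_iff, Set.mem_singleton_iff] at hw
    rcases hw with rfl | rfl | rfl | rfl
    exacts [hA, hB, hC, hD]
  have hcpts : contactPoints P S' = {p, q} := by
    ext x
    constructor
    · rintro ⟨hxP, a, hxa⟩
      have hm : (x, a) ∈ contactPairs P S' := ⟨hxP, hxa⟩
      rw [heq] at hm
      simp only [Set.mem_insert_iff, Set.mem_singleton_iff, Prod.mk.injEq] at hm
      rcases hm with ⟨h, -⟩ | ⟨h, -⟩ | ⟨h, -⟩ | ⟨h, -⟩ <;> simp [h]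
    · rintro (rfl | rfl)
      · exact ⟨hp, SqSide.bottom, hpb'⟩
      · exact ⟨hq, SqSide.bottom, hqb'⟩
  refine ⟨S', hθeq, hpb', hpl', hqb', hqr', hsubset, hempty',
    ⟨SqSide.bottom, p, hp, q, hq, hpq, hpb', hqb'⟩,
    ⟨⟨hempty', by rw [heq, h4]⟩, by rw [hcpts]; exact Set.ncard_pair hpq⟩, heq⟩
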